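/- arXiv:1611.04971 — 2 statements merged into one kernel-verified Lean document; each statement's English description precedes it below -/
import Mathlib

section
/- Under metric compatibility of the Poisson-compatible connection ∇, the order-λ correction to the quantum dimension equals (λ/2){g_{μν}, g^{μν}}; explicitly, −λ ω^{αβ} g^{μν}_{,α} Γ_{νβμ} = (λ/2) ω^{αβ} g_{μν,α} g^{μν}_{,β}. -/
/-- Partial derivative of `f : (Fin n → ℝ) → ℝ` in the `i`-th coordinate direction. -/
noncomputable def pd {n : ℕ} (i : Fin n) (f : (Fin n → ℝ) → ℝ) (x : Fin n → ℝ) : ℝ :=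
  fderiv ℝ f x (Pi.single i 1)

/-- Under metric compatibility of the quantising connection, the order-`λ` correction to
the quantum dimension equals `(λ/2){g_{μν}, g^{μν}}`:
`−λ ω^{αβ} g^{μν}_{,α} Γ_{νβμ} = (λ/2) ω^{αβ} g_{μν,α} g^{μν}_{,β}`. -/
theorem stmt3 (n : ℕ)
    (g ginv ω : Fin n → Fin n → (Fin n → ℝ) → ℝ)
    (Γ : Fin n → Fin n → Fin n → (Fin n → ℝ) → ℝ)
    (hg_symm : ∀ μ ν x, g μ ν x = g ν μ x)
    (hginv_symm : ∀ μ ν x, ginv μ ν x = ginv ν μ x)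
    (hω_anti : ∀ α β x, ω α β x = -ω β α x)
    (h_inv : ∀ α β x, ∑ δ, g α δ x * ginv δ β x = if α = β then (1:ℝ) else 0)
    (h_inv' : ∀ α β x, ∑ δ, ginv α δ x * g δ β x = if α = β then (1:ℝ) else 0)
    (hdg : ∀ μ ν, Differentiable ℝ (g μ ν))
    (hdginv : ∀ μ ν, Differentiable ℝ (ginv μ ν))
    (hΓ_compat : ∀ β μ ν x,
      pd β (g μ ν) x = (∑ δ, g μ δ x * Γ δ β ν x) + ∑ δ, g ν δ x * Γ δ β μ x) :
    ∀ (lam : ℝ) (x : Fin n → ℝ),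
      -lam * ∑ α, ∑ β, ∑ μ, ∑ ν,
          ω α β x * pd α (ginv μ ν) x * (∑ δ, g ν δ x * Γ δ β μ x)
      = (lam/2) * ∑ α, ∑ β, ω α β x *
          ∑ μ, ∑ ν, pd α (g μ ν) x * pd β (ginv μ ν) x := by
  intro lam x
  have hpginv : ∀ (i μ ν : Fin n), pd i (ginv μ ν) x = pd i (ginv ν μ) x := by
    intro i μ ν
    have h : ginv μ ν = ginv ν μ := funext fun y => hginv_symm μ ν y
    rw [h]
  -- key double-sum identity
  have key : ∀ α β, ∑ μ, ∑ ν, pd α (ginv μ ν) x * (∑ δ, g ν δ x * Γ δ β μ x)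
      = (1/2) * ∑ μ, ∑ ν, pd α (ginv μ ν) x * pd β (g μ ν) x := by
    intro α β
    have swap : ∑ μ, ∑ ν, pd α (ginv μ ν) x * (∑ δ, g ν δ x * Γ δ β μ x)
        = ∑ μ, ∑ ν, pd α (ginv μ ν) x * (∑ δ, g μ δ x * Γ δ β ν x) := by
      rw [Finset.sum_comm]
      refine Finset.sum_congr rfl fun ν _ => Finset.sum_congr rfl fun μ _ => ?_
      rw [hpginv α ν μ]
    have h2 : (∑ μ, ∑ ν, pd α (ginv μ ν) x * (∑ δ, g ν δ x * Γ δ β μ x))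
        + (∑ μ, ∑ ν, pd α (ginv μ ν) x * (∑ δ, g ν δ x * Γ δ β μ x))
        = ∑ μ, ∑ ν, pd α (ginv μ ν) x * pd β (g μ ν) x := by
      nth_rewrite 2 [swap]
      rw [← Finset.sum_add_distrib]
      refine Finset.sum_congr rfl fun μ _ => ?_
      rw [← Finset.sum_add_distrib]
      refine Finset.sum_congr rfl fun ν _ => ?_
      rw [hΓ_compat β μ ν x]; ring
    linarith [h2]
  -- rewrite LHS
  have lhs_eq : ∑ α, ∑ β, ∑ μ, ∑ ν,
        ω α β x * pd α (ginv μ ν) x * (∑ δ, g ν δ x * Γ δ β μ x)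
      = ∑ α, ∑ β, ω α β x *
          ((1/2) * ∑ μ, ∑ ν, pd α (ginv μ ν) x * pd β (g μ ν) x) := by
    refine Finset.sum_congr rfl fun α _ => Finset.sum_congr rfl fun β _ => ?_
    rw [← key α β, Finset.mul_sum]
    refine Finset.sum_congr rfl fun μ _ => ?_
    rw [Finset.mul_sum]
    refine Finset.sum_congr rfl fun ν _ => ?_
    ring
  -- rewrite RHS using antisymmetry
  have rhs_eq : ∑ α, ∑ β, ω α β x * ∑ μ, ∑ ν, pd α (g μ ν) x * pd β (ginv μ ν) x
      = -∑ α, ∑ β, ω α β x * ∑ μ, ∑ ν, pd α (ginv μ ν) x * pd β (g μ ν) x := by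
    rw [Finset.sum_comm, ← Finset.sum_neg_distrib]
    refine Finset.sum_congr rfl fun α _ => ?_
    rw [← Finset.sum_neg_distrib]
    refine Finset.sum_congr rfl fun β _ => ?_
    rw [hω_anti β α x]
    have hs : ∑ μ, ∑ ν, pd β (g μ ν) x * pd α (ginv μ ν) x
        = ∑ μ, ∑ ν, pd α (ginv μ ν) x * pd β (g μ ν) x := by
      refine Finset.sum_congr rfl fun μ _ => Finset.sum_congr rfl fun ν _ => ?_
      ring
    rw [hs]; ring
  rw [lhs_eq, rhs_eq]
  rw [← Finset.sum_neg_distrib, Finset.mul_sum, Finset.mul_sum]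
  refine Finset.sum_congr rfl fun α _ => ?_
  rw [← Finset.sum_neg_distrib, Finset.mul_sum, Finset.mul_sum]
  refine Finset.sum_congr rfl fun β _ => ?_
  ring
end

section
/- The Schwarzschild metric g = −(1 − r_S/r) dt⊗dt + (1 − r_S/r)^{−1} dr⊗dr + r² dΩ² is Ricci flat: R̂_{μν} = 0 for all μ,ν, on the region r > r_S. -/
set_option maxHeartbeats 4000000

/-- The Schwarzschild metric in coordinates `x = (t, r, θ, φ)`:
`g = −(1 − r_S/r)dt⊗dt + (1 − r_S/r)⁻¹dr⊗dr + r²(dθ⊗dθ + sin²θ dφ⊗dφ)`. -/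
noncomputable def gSch (rS : ℝ) (μ ν : Fin 4) (x : Fin 4 → ℝ) : ℝ :=
  if μ = 0 ∧ ν = 0 then -(1 - rS / x 1)
  else if μ = 1 ∧ ν = 1 then (1 - rS / x 1)⁻¹
  else if μ = 2 ∧ ν = 2 then (x 1)^2
  else if μ = 3 ∧ ν = 3 then (x 1)^2 * (Real.sin (x 2))^2
  else 0

/-- The inverse Schwarzschild metric. -/
noncomputable def ginvSch (rS : ℝ) (μ ν : Fin 4) (x : Fin 4 → ℝ) : ℝ :=
  if μ = 0 ∧ ν = 0 then -(1 - rS / x 1)⁻¹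
  else if μ = 1 ∧ ν = 1 then 1 - rS / x 1
  else if μ = 2 ∧ ν = 2 then 1 / (x 1)^2
  else if μ = 3 ∧ ν = 3 then 1 / ((x 1)^2 * (Real.sin (x 2))^2)
  else 0

/-- Levi-Civita Christoffel symbols of the Schwarzschild metric. -/
noncomputable def ΓSch (rS : ℝ) (μ α β : Fin 4) (x : Fin 4 → ℝ) : ℝ :=
  (1/2) * ∑ ν, ginvSch rS μ ν x *
    (pd β (gSch rS ν α) x + pd α (gSch rS ν β) x - pd ν (gSch rS α β) x)

/-- Ricci tensor of the Levi-Civita connection of the Schwarzschild metric. -/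
noncomputable def RicSch (rS : ℝ) (μ ν : Fin 4) (x : Fin 4 → ℝ) : ℝ :=
  (∑ α, pd α (fun y => ΓSch rS α μ ν y) x)
    - pd ν (fun y => ∑ α, ΓSch rS α μ α y) x
    + ∑ α, ∑ β, (ΓSch rS α α β x * ΓSch rS β μ ν x - ΓSch rS α ν β x * ΓSch rS β μ α x)

/-! ### Derivative toolkit -/

lemma pd_mul' (f g : ℝ → ℝ) (f' g' : ℝ) (x : Fin 4 → ℝ)
    (hf : HasDerivAt f f' (x 1)) (hg : HasDerivAt g g' (x 2)) (i : Fin 4) :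
    pd i (fun y => f (y 1) * g (y 2)) x =
      if i = 1 then f' * g (x 2) else if i = 2 then f (x 1) * g' else 0 := by
  have p1 : HasFDerivAt (fun y : Fin 4 → ℝ => y 1)
      (ContinuousLinearMap.proj 1 : (Fin 4 → ℝ) →L[ℝ] ℝ) x :=
    (ContinuousLinearMap.proj 1 : (Fin 4 → ℝ) →L[ℝ] ℝ).hasFDerivAt
  have p2 : HasFDerivAt (fun y : Fin 4 → ℝ => y 2)
      (ContinuousLinearMap.proj 2 : (Fin 4 → ℝ) →L[ℝ] ℝ) x :=
    (ContinuousLinearMap.proj 2 : (Fin 4 → ℝ) →L[ℝ] ℝ).hasFDerivAt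
  have h1 : HasFDerivAt (fun y : Fin 4 → ℝ => f (y 1))
      (f' • (ContinuousLinearMap.proj 1 : (Fin 4 → ℝ) →L[ℝ] ℝ)) x :=
    hf.comp_hasFDerivAt x p1
  have h2 : HasFDerivAt (fun y : Fin 4 → ℝ => g (y 2))
      (g' • (ContinuousLinearMap.proj 2 : (Fin 4 → ℝ) →L[ℝ] ℝ)) x :=
    hg.comp_hasFDerivAt x p2
  have h := h1.mul h2
  rw [pd, show (fun y : Fin 4 → ℝ => f (y 1) * g (y 2)) = ((fun y : Fin 4 → ℝ => f (y 1)) * fun y => g (y 2)) from rfl, h.fderiv]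
  fin_cases i <;>
    simp [ContinuousLinearMap.proj_apply, Pi.single_apply] <;> ring

lemma pd_r (f : ℝ → ℝ) (f' : ℝ) (x : Fin 4 → ℝ) (hf : HasDerivAt f f' (x 1)) (i : Fin 4) :
    pd i (fun y => f (y 1)) x = if i = 1 then f' else 0 := by
  have h := pd_mul' f (fun _ => 1) f' 0 x hf (hasDerivAt_const _ 1) i
  simp only [mul_one, mul_zero] at h
  rw [h]
  by_cases h1 : i = 1 <;> by_cases h2 : i = 2 <;> simp_all

lemma pd_th (g : ℝ → ℝ) (g' : ℝ) (x : Fin 4 → ℝ) (hg : HasDerivAt g g' (x 2)) (i : Fin 4) :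
    pd i (fun y => g (y 2)) x = if i = 2 then g' else 0 := by
  have h := pd_mul' (fun _ => 1) g 0 g' x (hasDerivAt_const _ 1) hg i
  simp only [one_mul, zero_mul] at h
  rw [h]
  by_cases h1 : i = 1 <;> by_cases h2 : i = 2 <;> simp_all

lemma pd_congr {f g : (Fin 4 → ℝ) → ℝ} {x : Fin 4 → ℝ} (h : f =ᶠ[nhds x] g) (i : Fin 4) :
    pd i f x = pd i g x := by
  unfold pd; rw [h.fderiv_eq]

/-! ### Explicit Christoffel symbols and their derivatives -/

/-- Explicit closed form of the Christoffel symbols. -/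
noncomputable def Γe (rS : ℝ) (μ α β : Fin 4) (y : Fin 4 → ℝ) : ℝ :=
  if μ = 0 ∧ (α = 0 ∧ β = 1 ∨ α = 1 ∧ β = 0) then rS / (2 * y 1 * (y 1 - rS))
  else if μ = 1 ∧ α = 0 ∧ β = 0 then rS * (y 1 - rS) / (2 * (y 1)^3)
  else if μ = 1 ∧ α = 1 ∧ β = 1 then -(rS / (2 * y 1 * (y 1 - rS)))
  else if μ = 1 ∧ α = 2 ∧ β = 2 then -(y 1 - rS)
  else if μ = 1 ∧ α = 3 ∧ β = 3 then -(y 1 - rS) * Real.sin (y 2) ^ 2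
  else if (μ = 2 ∧ (α = 1 ∧ β = 2 ∨ α = 2 ∧ β = 1)) ∨
          (μ = 3 ∧ (α = 1 ∧ β = 3 ∨ α = 3 ∧ β = 1)) then 1 / y 1
  else if μ = 2 ∧ α = 3 ∧ β = 3 then -(Real.sin (y 2) * Real.cos (y 2))
  else if μ = 3 ∧ (α = 2 ∧ β = 3 ∨ α = 3 ∧ β = 2) then Real.cos (y 2) / Real.sin (y 2)
  else 0

/-- Table of partial derivatives of the metric components. -/
noncomputable def gd (rS : ℝ) (i α β : Fin 4) (x : Fin 4 → ℝ) : ℝ :=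
  if i = 1 ∧ α = 0 ∧ β = 0 then -(rS/(x 1)^2)
  else if i = 1 ∧ α = 1 ∧ β = 1 then -(rS/(x 1 - rS)^2)
  else if i = 1 ∧ α = 2 ∧ β = 2 then 2*x 1
  else if i = 1 ∧ α = 3 ∧ β = 3 then 2*x 1*Real.sin (x 2)^2
  else if i = 2 ∧ α = 3 ∧ β = 3 then (x 1)^2*(2*Real.sin (x 2)*Real.cos (x 2))
  else 0

/-- Table of partial derivatives of the Christoffel symbols. -/
noncomputable def Γd (rS : ℝ) (i μ α β : Fin 4) (x : Fin 4 → ℝ) : ℝ :=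
  if i = 1 ∧ μ = 0 ∧ (α = 0 ∧ β = 1 ∨ α = 1 ∧ β = 0) then
    -(rS*(2*x 1 - rS))/(2*(x 1)^2*(x 1 - rS)^2)
  else if i = 1 ∧ μ = 1 ∧ α = 0 ∧ β = 0 then rS*(3*rS - 2*x 1)/(2*(x 1)^4)
  else if i = 1 ∧ μ = 1 ∧ α = 1 ∧ β = 1 then rS*(2*x 1 - rS)/(2*(x 1)^2*(x 1 - rS)^2)
  else if i = 1 ∧ μ = 1 ∧ α = 2 ∧ β = 2 then -1
  else if i = 1 ∧ μ = 1 ∧ α = 3 ∧ β = 3 then -(Real.sin (x 2)^2)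
  else if i = 2 ∧ μ = 1 ∧ α = 3 ∧ β = 3 then -(x 1 - rS)*(2*Real.sin (x 2)*Real.cos (x 2))
  else if i = 1 ∧ ((μ = 2 ∧ (α = 1 ∧ β = 2 ∨ α = 2 ∧ β = 1)) ∨
                   (μ = 3 ∧ (α = 1 ∧ β = 3 ∨ α = 3 ∧ β = 1))) then -(1/(x 1)^2)
  else if i = 2 ∧ μ = 2 ∧ α = 3 ∧ β = 3 then Real.sin (x 2)^2 - Real.cos (x 2)^2
  else if i = 2 ∧ μ = 3 ∧ (α = 2 ∧ β = 3 ∨ α = 3 ∧ β = 2) then -(1/Real.sin (x 2)^2)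
  else 0

/-- Partial derivatives of the metric. -/
lemma pd_gSch (rS : ℝ) (y : Fin 4 → ℝ) (hr : y 1 ≠ 0) (hu : y 1 - rS ≠ 0) :
    ∀ i α β, pd i (gSch rS α β) y = gd rS i α β y := by
  have hf : 1 - rS / y 1 ≠ 0 := by
    rw [show 1 - rS / y 1 = (y 1 - rS)/(y 1) from by field_simp]
    exact div_ne_zero hu hr
  have hdA : HasDerivAt (fun s : ℝ => -(1 - rS/s)) (-(rS/(y 1)^2)) (y 1) := by
    have h := ((hasDerivAt_const (y 1) (1:ℝ)).sub
      ((hasDerivAt_const (y 1) rS).div (hasDerivAt_id (y 1)) hr)).neg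
    refine h.congr_deriv (Eq.symm ?_)
    simp only [id]
    field_simp
    ring
  have hdB : HasDerivAt (fun s : ℝ => (1 - rS/s)⁻¹) (-(rS/(y 1 - rS)^2)) (y 1) := by
    have h0 : HasDerivAt (fun s : ℝ => 1 - rS/s) ((0 : ℝ) - (0 * y 1 - rS * 1)/(y 1)^2) (y 1) :=
      (hasDerivAt_const (y 1) (1:ℝ)).sub ((hasDerivAt_const (y 1) rS).div (hasDerivAt_id (y 1)) hr)
    have h := h0.inv hf
    refine h.congr_deriv (Eq.symm ?_)
    rw [show 1 - rS / y 1 = (y 1 - rS)/(y 1) from by field_simp]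
    field_simp
    ring
  have hdC : HasDerivAt (fun s : ℝ => s^2) (2*y 1) (y 1) := by simpa using hasDerivAt_pow 2 (y 1)
  have hdS2 : HasDerivAt (fun t : ℝ => Real.sin t ^ 2)
      (2*Real.sin (y 2)*Real.cos (y 2)) (y 2) := by
    have h := (Real.hasDerivAt_sin (y 2)).pow 2
    refine h.congr_deriv (Eq.symm ?_)
    push_cast
    ring
  have f4 : ∀ a : Fin 4, a = 0 ∨ a = 1 ∨ a = 2 ∨ a = 3 := by decide
  intro i α β
  rcases f4 α with rfl | rfl | rfl | rfl <;> rcases f4 β with rfl | rfl | rfl | rfl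
  · -- 0 0
    rw [show gSch rS 0 0 = (fun y => -(1 - rS / y 1)) from funext fun z => by simp [gSch]]
    exact (pd_r _ _ y hdA i).trans (by rcases f4 i with rfl | rfl | rfl | rfl <;> simp [gd])
  · rw [show gSch rS 0 1 = (fun _ => (0:ℝ)) from funext fun z => by simp [gSch]]
    simp [pd, gd]
  · rw [show gSch rS 0 2 = (fun _ => (0:ℝ)) from funext fun z => by simp [gSch]]
    simp [pd, gd]
  · rw [show gSch rS 0 3 = (fun _ => (0:ℝ)) from funext fun z => by simp [gSch]]
    simp [pd, gd]
  · rw [show gSch rS 1 0 = (fun _ => (0:ℝ)) from funext fun z => by simp [gSch]]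
    simp [pd, gd]
  · -- 1 1
    rw [show gSch rS 1 1 = (fun y => (1 - rS / y 1)⁻¹) from funext fun z => by simp [gSch]]
    exact (pd_r _ _ y hdB i).trans (by rcases f4 i with rfl | rfl | rfl | rfl <;> simp [gd])
  · rw [show gSch rS 1 2 = (fun _ => (0:ℝ)) from funext fun z => by simp [gSch]]
    simp [pd, gd]
  · rw [show gSch rS 1 3 = (fun _ => (0:ℝ)) from funext fun z => by simp [gSch]]
    simp [pd, gd]
  · rw [show gSch rS 2 0 = (fun _ => (0:ℝ)) from funext fun z => by simp [gSch]]
    simp [pd, gd]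
  · rw [show gSch rS 2 1 = (fun _ => (0:ℝ)) from funext fun z => by simp [gSch]]
    simp [pd, gd]
  · -- 2 2
    rw [show gSch rS 2 2 = (fun y => (y 1)^2) from funext fun z => by simp [gSch]]
    exact (pd_r _ _ y hdC i).trans (by rcases f4 i with rfl | rfl | rfl | rfl <;> simp [gd])
  · rw [show gSch rS 2 3 = (fun _ => (0:ℝ)) from funext fun z => by simp [gSch]]
    simp [pd, gd]
  · rw [show gSch rS 3 0 = (fun _ => (0:ℝ)) from funext fun z => by simp [gSch]]
    simp [pd, gd]
  · rw [show gSch rS 3 1 = (fun _ => (0:ℝ)) from funext fun z => by simp [gSch]]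
    simp [pd, gd]
  · rw [show gSch rS 3 2 = (fun _ => (0:ℝ)) from funext fun z => by simp [gSch]]
    simp [pd, gd]
  · -- 3 3
    rw [show gSch rS 3 3 = (fun y => (y 1)^2 * Real.sin (y 2)^2) from
      funext fun z => by simp [gSch]]
    exact (pd_mul' _ _ _ _ y hdC hdS2 i).trans (by rcases f4 i with rfl | rfl | rfl | rfl <;> simp [gd] <;> ring)

/-- The Christoffel symbols agree with their closed form on the exterior region. -/
lemma Γ_eq (rS : ℝ) (hrS : 0 < rS) (y : Fin 4 → ℝ) (hy : rS < y 1)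
    (hs : Real.sin (y 2) ≠ 0) :
    ∀ μ α β, ΓSch rS μ α β y = Γe rS μ α β y := by
  have hr : y 1 ≠ 0 := ne_of_gt (lt_trans hrS hy)
  have hu : y 1 - rS ≠ 0 := sub_ne_zero.mpr (ne_of_gt hy)
  have hf : 1 - rS / y 1 ≠ 0 := by
    rw [show 1 - rS / y 1 = (y 1 - rS)/(y 1) from by field_simp]
    exact div_ne_zero hu hr
  have hg := pd_gSch rS y hr hu
  have f4 : ∀ a : Fin 4, a = 0 ∨ a = 1 ∨ a = 2 ∨ a = 3 := by decide
  intro μ α β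
  rcases f4 μ with rfl | rfl | rfl | rfl <;>
    rcases f4 α with rfl | rfl | rfl | rfl <;>
      rcases f4 β with rfl | rfl | rfl | rfl <;>
        simp only [ΓSch, Fin.sum_univ_four, hg] <;>
          simp [ginvSch, gd, Γe] <;>
            field_simp <;> ring

/-- Partial derivatives of the explicit Christoffel symbols. -/
lemma pd_Γe (rS : ℝ) (x : Fin 4 → ℝ) (hr : x 1 ≠ 0) (hu : x 1 - rS ≠ 0)
    (hs : Real.sin (x 2) ≠ 0) :
    ∀ i μ α β, pd i (Γe rS μ α β) x = Γd rS i μ α β x := by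
  have f4 : ∀ a : Fin 4, a = 0 ∨ a = 1 ∨ a = 2 ∨ a = 3 := by decide
  -- derivative pack
  have hd1 : HasDerivAt (fun s : ℝ => rS/(2*s*(s - rS)))
      (-(rS*(2*x 1 - rS))/(2*(x 1)^2*(x 1 - rS)^2)) (x 1) := by
    have hd : HasDerivAt (fun s : ℝ => 2*s*(s - rS)) ((2*1)*(x 1 - rS) + (2*x 1)*1) (x 1) :=
      ((hasDerivAt_id (x 1)).const_mul 2).mul ((hasDerivAt_id (x 1)).sub_const rS)
    have hne : 2*x 1*(x 1 - rS) ≠ 0 := mul_ne_zero (mul_ne_zero two_ne_zero hr) hu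
    have h := (hasDerivAt_const (x 1) rS).div hd hne
    refine h.congr_deriv (Eq.symm ?_)
    field_simp
    ring
  have hd2 : HasDerivAt (fun s : ℝ => rS*(s - rS)/(2*s^3))
      (rS*(3*rS - 2*x 1)/(2*(x 1)^4)) (x 1) := by
    have hc : HasDerivAt (fun s : ℝ => rS*(s - rS)) (rS*1) (x 1) :=
      ((hasDerivAt_id (x 1)).sub_const rS).const_mul rS
    have hd : HasDerivAt (fun s : ℝ => 2*s^3) (2*((3:ℕ)*(x 1)^2)) (x 1) :=
      (hasDerivAt_pow 3 (x 1)).const_mul 2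
    have hne : 2*(x 1)^3 ≠ 0 := mul_ne_zero two_ne_zero (pow_ne_zero 3 hr)
    have h := hc.div hd hne
    refine h.congr_deriv (Eq.symm ?_)
    field_simp
    ring
  have hd3 : HasDerivAt (fun s : ℝ => -(rS/(2*s*(s - rS))))
      (rS*(2*x 1 - rS)/(2*(x 1)^2*(x 1 - rS)^2)) (x 1) := by
    have h := hd1.neg
    refine h.congr_deriv (Eq.symm ?_)
    ring
  have hd4 : HasDerivAt (fun s : ℝ => -(s - rS)) (-1 : ℝ) (x 1) := by
    exact ((hasDerivAt_id (x 1)).sub_const rS).neg.congr_deriv (by norm_num)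
  have hd6 : HasDerivAt (fun s : ℝ => 1/s) (-(1/(x 1)^2)) (x 1) := by
    have h := (hasDerivAt_const (x 1) (1:ℝ)).div (hasDerivAt_id (x 1)) hr
    refine h.congr_deriv (Eq.symm ?_)
    simp only [id]
    field_simp
    ring
  have hdS2 : HasDerivAt (fun t : ℝ => Real.sin t ^ 2)
      (2*Real.sin (x 2)*Real.cos (x 2)) (x 2) := by
    have h := (Real.hasDerivAt_sin (x 2)).pow 2
    refine h.congr_deriv (Eq.symm ?_)
    push_cast
    ring
  have hd7 : HasDerivAt (fun t : ℝ => -(Real.sin t * Real.cos t))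
      (Real.sin (x 2)^2 - Real.cos (x 2)^2) (x 2) := by
    have h := ((Real.hasDerivAt_sin (x 2)).mul (Real.hasDerivAt_cos (x 2))).neg
    refine h.congr_deriv (Eq.symm ?_)
    ring
  have hd8 : HasDerivAt (fun t : ℝ => Real.cos t / Real.sin t) (-(1/Real.sin (x 2)^2)) (x 2) := by
    have h := (Real.hasDerivAt_cos (x 2)).div (Real.hasDerivAt_sin (x 2)) hs
    refine h.congr_deriv (Eq.symm ?_)
    rw [show -Real.sin (x 2) * Real.sin (x 2) - Real.cos (x 2) * Real.cos (x 2) = -1 from by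
      nlinarith [Real.sin_sq_add_cos_sq (x 2)]]
    ring
  have hzero : ∀ (a b c : Fin 4), (∀ z, Γe rS a b c z = 0) → ∀ j : Fin 4,
      pd j (Γe rS a b c) x = 0 := by
    intro a b c h j
    rw [funext h]
    simp [pd]
  intro i μ α β
  rcases f4 μ with rfl | rfl | rfl | rfl <;>
    rcases f4 α with rfl | rfl | rfl | rfl <;>
      rcases f4 β with rfl | rfl | rfl | rfl <;>
  first
  | (refine (hzero _ _ _ (fun z => ?_) i).trans ?_ <;> simp [Γe, Γd] <;> done)
  | (rw [show Γe rS 0 0 1 = (fun y => rS / (2 * y 1 * (y 1 - rS))) from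
        funext fun z => by simp [Γe]];
     exact (pd_r _ _ x hd1 i).trans
       (by rcases f4 i with rfl | rfl | rfl | rfl <;> simp [Γd] <;> try ring))
  | (rw [show Γe rS 0 1 0 = (fun y => rS / (2 * y 1 * (y 1 - rS))) from
        funext fun z => by simp [Γe]];
     exact (pd_r _ _ x hd1 i).trans
       (by rcases f4 i with rfl | rfl | rfl | rfl <;> simp [Γd] <;> try ring))
  | (rw [show Γe rS 1 0 0 = (fun y => rS * (y 1 - rS) / (2 * (y 1)^3)) from
        funext fun z => by simp [Γe]];
     exact (pd_r _ _ x hd2 i).trans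
       (by rcases f4 i with rfl | rfl | rfl | rfl <;> simp [Γd] <;> try ring))
  | (rw [show Γe rS 1 1 1 = (fun y => -(rS / (2 * y 1 * (y 1 - rS)))) from
        funext fun z => by simp [Γe]];
     exact (pd_r _ _ x hd3 i).trans
       (by rcases f4 i with rfl | rfl | rfl | rfl <;> simp [Γd] <;> try ring))
  | (rw [show Γe rS 1 2 2 = (fun y => -(y 1 - rS)) from funext fun z => by simp [Γe]];
     exact (pd_r _ _ x hd4 i).trans
       (by rcases f4 i with rfl | rfl | rfl | rfl <;> simp [Γd] <;> try ring))
  | (rw [show Γe rS 1 3 3 = (fun y => -(y 1 - rS) * Real.sin (y 2) ^ 2) from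
        funext fun z => by simp [Γe]];
     exact (pd_mul' _ _ _ _ x hd4 hdS2 i).trans
       (by rcases f4 i with rfl | rfl | rfl | rfl <;> simp [Γd] <;> try ring))
  | (rw [show Γe rS 2 1 2 = (fun y => 1 / y 1) from funext fun z => by simp [Γe]];
     exact (pd_r _ _ x hd6 i).trans
       (by rcases f4 i with rfl | rfl | rfl | rfl <;> simp [Γd] <;> try ring))
  | (rw [show Γe rS 2 2 1 = (fun y => 1 / y 1) from funext fun z => by simp [Γe]];
     exact (pd_r _ _ x hd6 i).trans
       (by rcases f4 i with rfl | rfl | rfl | rfl <;> simp [Γd] <;> try ring))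
  | (rw [show Γe rS 3 1 3 = (fun y => 1 / y 1) from funext fun z => by simp [Γe]];
     exact (pd_r _ _ x hd6 i).trans
       (by rcases f4 i with rfl | rfl | rfl | rfl <;> simp [Γd] <;> try ring))
  | (rw [show Γe rS 3 3 1 = (fun y => 1 / y 1) from funext fun z => by simp [Γe]];
     exact (pd_r _ _ x hd6 i).trans
       (by rcases f4 i with rfl | rfl | rfl | rfl <;> simp [Γd] <;> try ring))
  | (rw [show Γe rS 2 3 3 = (fun y => -(Real.sin (y 2) * Real.cos (y 2))) from
        funext fun z => by simp [Γe]];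
     exact (pd_th _ _ x hd7 i).trans
       (by rcases f4 i with rfl | rfl | rfl | rfl <;> simp [Γd] <;> try ring))
  | (rw [show Γe rS 3 2 3 = (fun y => Real.cos (y 2) / Real.sin (y 2)) from
        funext fun z => by simp [Γe]];
     exact (pd_th _ _ x hd8 i).trans
       (by rcases f4 i with rfl | rfl | rfl | rfl <;> simp [Γd] <;> try ring))
  | (rw [show Γe rS 3 3 2 = (fun y => Real.cos (y 2) / Real.sin (y 2)) from
        funext fun z => by simp [Γe]];
     exact (pd_th _ _ x hd8 i).trans
       (by rcases f4 i with rfl | rfl | rfl | rfl <;> simp [Γd] <;> try ring))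

/-- Derivative of the trace of the Christoffel symbols. -/
lemma pd_trace (rS : ℝ) (x : Fin 4 → ℝ) (hr : x 1 ≠ 0) (hu : x 1 - rS ≠ 0)
    (hs : Real.sin (x 2) ≠ 0) :
    ∀ i μ, pd i (fun y => Γe rS 0 μ 0 y + Γe rS 1 μ 1 y + Γe rS 2 μ 2 y + Γe rS 3 μ 3 y) x
      = if μ = 1 ∧ i = 1 then -(2/(x 1)^2)
        else if μ = 2 ∧ i = 2 then -(1/Real.sin (x 2)^2) else 0 := by
  have f4 : ∀ a : Fin 4, a = 0 ∨ a = 1 ∨ a = 2 ∨ a = 3 := by decide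
  have hdTr : HasDerivAt (fun s : ℝ => 2/s) (-(2/(x 1)^2)) (x 1) := by
    have h := (hasDerivAt_const (x 1) (2:ℝ)).div (hasDerivAt_id (x 1)) hr
    refine h.congr_deriv (Eq.symm ?_)
    simp only [id]
    field_simp
    ring
  have hd8 : HasDerivAt (fun t : ℝ => Real.cos t / Real.sin t) (-(1/Real.sin (x 2)^2)) (x 2) := by
    have h := (Real.hasDerivAt_cos (x 2)).div (Real.hasDerivAt_sin (x 2)) hs
    refine h.congr_deriv (Eq.symm ?_)
    rw [show -Real.sin (x 2) * Real.sin (x 2) - Real.cos (x 2) * Real.cos (x 2) = -1 from by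
      nlinarith [Real.sin_sq_add_cos_sq (x 2)]]
    ring
  intro i μ
  rcases f4 μ with rfl | rfl | rfl | rfl
  · rw [show (fun y => Γe rS 0 0 0 y + Γe rS 1 0 1 y + Γe rS 2 0 2 y + Γe rS 3 0 3 y)
        = (fun _ : Fin 4 → ℝ => (0:ℝ)) from funext fun z => by simp [Γe]]
    simp [pd]
  · rw [show (fun y => Γe rS 0 1 0 y + Γe rS 1 1 1 y + Γe rS 2 1 2 y + Γe rS 3 1 3 y)
        = (fun y : Fin 4 → ℝ => 2 / y 1) from funext fun z => by simp [Γe]; ring]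
    exact (pd_r _ _ x hdTr i).trans (by rcases f4 i with rfl|rfl|rfl|rfl <;> simp)
  · rw [show (fun y => Γe rS 0 2 0 y + Γe rS 1 2 1 y + Γe rS 2 2 2 y + Γe rS 3 2 3 y)
        = (fun y : Fin 4 → ℝ => Real.cos (y 2) / Real.sin (y 2)) from
        funext fun z => by simp [Γe]]
    exact (pd_th _ _ x hd8 i).trans (by rcases f4 i with rfl|rfl|rfl|rfl <;> simp)
  · rw [show (fun y => Γe rS 0 3 0 y + Γe rS 1 3 1 y + Γe rS 2 3 2 y + Γe rS 3 3 3 y)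
        = (fun _ : Fin 4 → ℝ => (0:ℝ)) from funext fun z => by simp [Γe]]
    simp [pd]

/-- The Schwarzschild metric is Ricci flat on the region `r > r_S`. -/
theorem stmt11 (rS : ℝ) (hrS : 0 < rS) :
    ∀ x : Fin 4 → ℝ, rS < x 1 → Real.sin (x 2) ≠ 0 →
      ∀ μ ν, RicSch rS μ ν x = 0 := by
  intro x hx1 hs μ ν
  have hr : x 1 ≠ 0 := ne_of_gt (lt_trans hrS hx1)
  have hu : x 1 - rS ≠ 0 := sub_ne_zero.mpr (ne_of_gt hx1)
  have f4 : ∀ a : Fin 4, a = 0 ∨ a = 1 ∨ a = 2 ∨ a = 3 := by decide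
  have hmem : ∀ᶠ y in nhds x, rS < y 1 ∧ Real.sin (y 2) ≠ 0 := by
    have h1 : ∀ᶠ y in nhds x, rS < y 1 :=
      ((continuous_apply (1 : Fin 4)).continuousAt).eventually (eventually_gt_nhds hx1)
    have h2 : ∀ᶠ y in nhds x, Real.sin (y 2) ≠ 0 :=
      ((Real.continuous_sin.comp (continuous_apply (2 : Fin 4))).continuousAt).eventually_ne hs
    exact h1.and h2
  have hΓ : ∀ μ α β, ΓSch rS μ α β x = Γe rS μ α β x := Γ_eq rS hrS x hx1 hs
  have hpdΓ := pd_Γe rS x hr hu hs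
  have htr := pd_trace rS x hr hu hs
  have hc1 : ∀ (a b c j : Fin 4), pd j (fun y => ΓSch rS a b c y) x = pd j (Γe rS a b c) x :=
    fun a b c j => pd_congr (hmem.mono fun y hy => Γ_eq rS hrS y hy.1 hy.2 a b c) j
  have hc2 : ∀ (j m : Fin 4),
      pd j (fun y => ΓSch rS 0 m 0 y + ΓSch rS 1 m 1 y + ΓSch rS 2 m 2 y + ΓSch rS 3 m 3 y) x
      = pd j (fun y => Γe rS 0 m 0 y + Γe rS 1 m 1 y + Γe rS 2 m 2 y + Γe rS 3 m 3 y) x :=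
    fun j m => pd_congr (hmem.mono fun y hy => by
      rw [Γ_eq rS hrS y hy.1 hy.2, Γ_eq rS hrS y hy.1 hy.2, Γ_eq rS hrS y hy.1 hy.2,
        Γ_eq rS hrS y hy.1 hy.2]) j
  simp only [RicSch, Fin.sum_univ_four, hc1, hc2, hpdΓ, htr, hΓ]
  rcases f4 μ with rfl|rfl|rfl|rfl <;> rcases f4 ν with rfl|rfl|rfl|rfl <;>
    simp [Γd, Γe] <;> field_simp <;> ring_nf <;>
      simp only [Real.cos_sq'] <;> ring_nf
end
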